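/- Fix z ∈ ℂ, d ∈ ℝ, ν ∈ ℤ, and for a real 2×2 matrix g with det g > 0 define Φ_ν(g) = (det g)^d · ( det g / (g₂₁² + g₂₂²) )^{z/2} · ( (g₂₂ - i·g₂₁) / √(g₂₁² + g₂₂²) )^ν. Let H = [[1,0],[0,-1]] and V = [[0,1],[1,0]]. Then for every real 2×2 matrix g with det g > 0, (d/ds)|_{s=0} Φ_ν( g·exp(sH) ) - i · (d/ds)|_{s=0} Φ_ν( g·exp(sV) ) = (z - ν) · Φ_{ν-2}(g), where Φ_{ν-2} is defined by the same formula with ν replaced by ν-2 (and the same z, d). -/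

import Mathlib

open Complex

/-- exp of `s • H` for `H = !![1,0;0,-1]`. -/
private lemma expH_eq (s : ℝ) :
    NormedSpace.exp (s • (!![1, 0; 0, -1] : Matrix (Fin 2) (Fin 2) ℝ)) =
      !![Real.exp s, 0; 0, Real.exp (-s)] := by
  have h1 : s • (!![1, 0; 0, -1] : Matrix (Fin 2) (Fin 2) ℝ) = Matrix.diagonal ![s, -s] := by
    ext i j; fin_cases i <;> fin_cases j <;> simp [Matrix.diagonal]
  rw [h1, Matrix.exp_diagonal]
  ext i j
  fin_cases i <;> fin_cases j <;>
    simp [Matrix.diagonal, Pi.exp_def, ← Real.exp_eq_exp_ℝ]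

/-- exp of `s • V` for `V = !![0,1;1,0]`. -/
private lemma expV_eq (s : ℝ) :
    NormedSpace.exp (s • (!![0, 1; 1, 0] : Matrix (Fin 2) (Fin 2) ℝ)) =
      !![(Real.exp s + Real.exp (-s)) / 2, (Real.exp s - Real.exp (-s)) / 2;
         (Real.exp s - Real.exp (-s)) / 2, (Real.exp s + Real.exp (-s)) / 2] := by
  set P : Matrix (Fin 2) (Fin 2) ℝ := !![1, 1; 1, -1] with hP
  set Q : Matrix (Fin 2) (Fin 2) ℝ := !![1/2, 1/2; 1/2, -(1/2)] with hQ
  have hPQ : P * Q = 1 := by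
    rw [hP, hQ, Matrix.mul_fin_two, Matrix.one_fin_two]; norm_num
  have hPinv : P⁻¹ = Q := Matrix.inv_eq_right_inv hPQ
  have hPunit : IsUnit P := by
    rw [Matrix.isUnit_iff_isUnit_det, hP, Matrix.det_fin_two_of]
    norm_num
  have hdiag : ∀ a b : ℝ, (Matrix.diagonal ![a, b] : Matrix (Fin 2) (Fin 2) ℝ) = !![a, 0; 0, b] := by
    intro a b; ext i j; fin_cases i <;> fin_cases j <;> simp [Matrix.diagonal]
  have h1 : s • (!![0, 1; 1, 0] : Matrix (Fin 2) (Fin 2) ℝ) = P * Matrix.diagonal ![s, -s] * P⁻¹ := by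
    rw [hPinv, hdiag, hP, hQ, Matrix.mul_fin_two, Matrix.mul_fin_two]
    ext i j; fin_cases i <;> fin_cases j <;> norm_num <;> ring
  rw [h1, Matrix.exp_conj _ _ hPunit, Matrix.exp_diagonal, hPinv]
  have h2 : (Matrix.diagonal (NormedSpace.exp ![s, -s]) : Matrix (Fin 2) (Fin 2) ℝ)
      = !![Real.exp s, 0; 0, Real.exp (-s)] := by
    ext i j; fin_cases i <;> fin_cases j <;>
      simp [Matrix.diagonal, Pi.exp_def, ← Real.exp_eq_exp_ℝ]
  rw [h2, hP, hQ, Matrix.mul_fin_two, Matrix.mul_fin_two]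
  ext i j; fin_cases i <;> fin_cases j <;> norm_num <;> ring

set_option maxHeartbeats 2000000 in
/-- Derivative at `0` of the principal-series-type expression along a curve with bottom row
`(u s, v s)` and constant determinant `Dr`. -/
private lemma key (z : ℂ) (ν : ℤ) (C : ℂ) {Dr : ℝ} (hD : 0 < Dr)
    {u v : ℝ → ℝ} {u' v' : ℝ} (hu : HasDerivAt u u' 0) (hv : HasDerivAt v v' 0)
    (hN : 0 < u 0 ^ 2 + v 0 ^ 2) :
    HasDerivAt
      (fun s : ℝ => C * ((Dr / (u s ^ 2 + v s ^ 2) : ℝ) : ℂ) ^ (z / 2) *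
        (((v s : ℂ) - Complex.I * (u s : ℂ)) / ((Real.sqrt (u s ^ 2 + v s ^ 2) : ℝ) : ℂ)) ^ ν)
      (C * ((Dr / (u 0 ^ 2 + v 0 ^ 2) : ℝ) : ℂ) ^ (z / 2) *
        (((v 0 : ℂ) - Complex.I * (u 0 : ℂ)) / ((Real.sqrt (u 0 ^ 2 + v 0 ^ 2) : ℝ) : ℂ)) ^ ν *
        (z / 2 * (-(2 * (u 0 : ℂ) * (u' : ℂ) + 2 * (v 0 : ℂ) * (v' : ℂ)) /
            ((u 0 : ℂ) ^ 2 + (v 0 : ℂ) ^ 2)) +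
         (ν : ℂ) * (((v' : ℂ) - Complex.I * (u' : ℂ)) / ((v 0 : ℂ) - Complex.I * (u 0 : ℂ)) -
            (2 * (u 0 : ℂ) * (u' : ℂ) + 2 * (v 0 : ℂ) * (v' : ℂ)) /
              (2 * ((Real.sqrt (u 0 ^ 2 + v 0 ^ 2) : ℝ) : ℂ) ^ 2)))) 0 := by
  have hN0 : (u 0 ^ 2 + v 0 ^ 2 : ℝ) ≠ 0 := hN.ne'
  have hNd : HasDerivAt (fun s => u s ^ 2 + v s ^ 2) (2 * u 0 * u' + 2 * v 0 * v') 0 := by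
    have h := (hu.pow 2).add (hv.pow 2)
    norm_num at h
    exact h.congr_deriv (by ring)
  have hF : HasDerivAt (fun s => Dr / (u s ^ 2 + v s ^ 2))
      (-(Dr * (2 * u 0 * u' + 2 * v 0 * v')) / (u 0 ^ 2 + v 0 ^ 2) ^ 2) 0 := by
    have h := (hasDerivAt_const (0:ℝ) Dr).div hNd hN0
    exact h.congr_deriv (by ring)
  have hFc := hF.ofReal_comp
  have hslit : ((Dr / (u 0 ^ 2 + v 0 ^ 2) : ℝ) : ℂ) ∈ Complex.slitPlane :=
    Complex.ofReal_mem_slitPlane.2 (div_pos hD hN)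
  have hcp : HasDerivAt (fun s : ℝ => ((Dr / (u s ^ 2 + v s ^ 2) : ℝ) : ℂ) ^ (z / 2))
      (((-(Dr * (2 * u 0 * u' + 2 * v 0 * v')) / (u 0 ^ 2 + v 0 ^ 2) ^ 2 : ℝ) : ℂ) •
        (z / 2 * ((Dr / (u 0 ^ 2 + v 0 ^ 2) : ℝ) : ℂ) ^ (z / 2 - 1))) 0 :=
    HasDerivAt.scomp_of_eq 0 (Complex.hasStrictDerivAt_cpow_const hslit).hasDerivAt hFc rfl
  have hsq : HasDerivAt (fun s => Real.sqrt (u s ^ 2 + v s ^ 2))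
      ((2 * u 0 * u' + 2 * v 0 * v') / (2 * Real.sqrt (u 0 ^ 2 + v 0 ^ 2))) 0 := hNd.sqrt hN0
  have hden := hsq.ofReal_comp
  have hnum : HasDerivAt (fun s : ℝ => ((v s : ℂ) - Complex.I * (u s : ℂ)))
      ((v' : ℂ) - Complex.I * (u' : ℂ)) 0 :=
    hv.ofReal_comp.sub (hu.ofReal_comp.const_mul Complex.I)
  have hrpos : 0 < Real.sqrt (u 0 ^ 2 + v 0 ^ 2) := Real.sqrt_pos.2 hN
  have hden0 : ((Real.sqrt (u 0 ^ 2 + v 0 ^ 2) : ℝ) : ℂ) ≠ 0 :=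
    Complex.ofReal_ne_zero.2 hrpos.ne'
  have hnum0 : ((v 0 : ℂ) - Complex.I * (u 0 : ℂ)) ≠ 0 := by
    intro h
    rw [Complex.ext_iff] at h
    simp at h
    nlinarith [h.1, h.2, hN]
  have hG := hnum.div hden hden0
  have hG0 : ((v 0 : ℂ) - Complex.I * (u 0 : ℂ)) / ((Real.sqrt (u 0 ^ 2 + v 0 ^ 2) : ℝ) : ℂ) ≠ 0 :=
    div_ne_zero hnum0 hden0
  have hzp := HasDerivAt.scomp_of_eq 0 (hasDerivAt_zpow ν _ (Or.inl hG0)) hG rfl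
  have htot := (hcp.const_mul C).mul hzp
  refine htot.congr_deriv ?_
  symm
  have hF0c : ((Dr / (u 0 ^ 2 + v 0 ^ 2) : ℝ) : ℂ) ≠ 0 :=
    Complex.ofReal_ne_zero.2 (div_pos hD hN).ne'
  have hN0c : ((u 0 : ℂ) ^ 2 + (v 0 : ℂ) ^ 2) ≠ 0 := by
    have : ((u 0 : ℂ) ^ 2 + (v 0 : ℂ) ^ 2) = ((u 0 ^ 2 + v 0 ^ 2 : ℝ) : ℂ) := by push_cast; ring
    rw [this]
    exact_mod_cast hN0
  have hDc : (Dr : ℂ) ≠ 0 := Complex.ofReal_ne_zero.2 hD.ne'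
  rw [Complex.cpow_sub _ _ hF0c, Complex.cpow_one, zpow_sub_one₀ hG0]
  simp only [Function.comp_apply, smul_eq_mul, Pi.div_apply]
  set A := ((Dr / (u 0 ^ 2 + v 0 ^ 2) : ℝ) : ℂ) ^ (z / 2) with hA
  set B := (((v 0 : ℂ) - Complex.I * (u 0 : ℂ)) / ((Real.sqrt (u 0 ^ 2 + v 0 ^ 2) : ℝ) : ℂ)) ^ ν
    with hB
  rw [mul_add]
  congr 1
  · push_cast
    field_simp
  · push_cast
    field_simp

/-- The K-finite vector of weight `ν` in the principal series of `GL₂(ℝ)⁺`: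
`Φ_ν(g) = (det g)^d · (det g/(g₂₁²+g₂₂²))^{z/2} · ((g₂₂ - i g₂₁)/√(g₂₁²+g₂₂²))^ν`. -/
noncomputable def Phi (z : ℂ) (d : ℝ) (ν : ℤ) (g : Matrix (Fin 2) (Fin 2) ℝ) : ℂ :=
  ((g.det ^ d : ℝ) : ℂ) *
    ((g.det / (g 1 0 ^ 2 + g 1 1 ^ 2) : ℝ) : ℂ) ^ (z / 2) *
    (((g 1 1 : ℂ) - Complex.I * (g 1 0 : ℂ)) /
        ((Real.sqrt (g 1 0 ^ 2 + g 1 1 ^ 2) : ℝ) : ℂ)) ^ ν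


set_option maxHeartbeats 2000000 in
/-- The lowering operator `P₋ = H - i⊗V` acts on `Φ_ν` by
`(d/ds)|₀ Φ_ν(g·exp(sH)) - i·(d/ds)|₀ Φ_ν(g·exp(sV)) = (z-ν)·Φ_{ν-2}(g)`. -/
theorem stmt_12 (z : ℂ) (d : ℝ) (ν : ℤ) (g : Matrix (Fin 2) (Fin 2) ℝ) (hg : 0 < g.det) :
    ∃ a b : ℂ,
      HasDerivAt (fun s : ℝ =>
        Phi z d ν (g * NormedSpace.exp (s • (!![1, 0; 0, -1] : Matrix (Fin 2) (Fin 2) ℝ)))) a 0 ∧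
      HasDerivAt (fun s : ℝ =>
        Phi z d ν (g * NormedSpace.exp (s • (!![0, 1; 1, 0] : Matrix (Fin 2) (Fin 2) ℝ)))) b 0 ∧
      a - Complex.I * b = (z - (ν : ℂ)) * Phi z d (ν - 2) g := by
  have hN : 0 < g 1 0 ^ 2 + g 1 1 ^ 2 := by
    by_contra h
    push_neg at h
    have h10 : g 1 0 = 0 := by nlinarith [sq_nonneg (g 1 0), sq_nonneg (g 1 1)]
    have h11 : g 1 1 = 0 := by nlinarith [sq_nonneg (g 1 0), sq_nonneg (g 1 1)]
    rw [Matrix.det_fin_two, h10, h11] at hg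
    simp at hg
  -- curves
  have hexp1 : HasDerivAt (fun s : ℝ => Real.exp s) 1 0 := by
    simpa using Real.hasDerivAt_exp 0
  have hexpm : HasDerivAt (fun s : ℝ => Real.exp (-s)) (-1) 0 := by
    have := ((hasDerivAt_id (0:ℝ)).neg).exp
    simpa using this
  have huH : HasDerivAt (fun s : ℝ => g 1 0 * Real.exp s) (g 1 0) 0 := by
    simpa using hexp1.const_mul (g 1 0)
  have hvH : HasDerivAt (fun s : ℝ => g 1 1 * Real.exp (-s)) (-(g 1 1)) 0 := by
    simpa using hexpm.const_mul (g 1 1)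
  have huV : HasDerivAt (fun s : ℝ =>
      g 1 0 * ((Real.exp s + Real.exp (-s)) / 2) + g 1 1 * ((Real.exp s - Real.exp (-s)) / 2))
      (g 1 1) 0 := by
    have h := (((hexp1.add hexpm).div_const 2).const_mul (g 1 0)).add
      (((hexp1.sub hexpm).div_const 2).const_mul (g 1 1))
    exact h.congr_deriv (by norm_num)
  have hvV : HasDerivAt (fun s : ℝ =>
      g 1 0 * ((Real.exp s - Real.exp (-s)) / 2) + g 1 1 * ((Real.exp s + Real.exp (-s)) / 2))
      (g 1 0) 0 := by
    have h := (((hexp1.sub hexpm).div_const 2).const_mul (g 1 0)).add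
      (((hexp1.add hexpm).div_const 2).const_mul (g 1 1))
    exact h.congr_deriv (by norm_num)
  have hNH : 0 < (g 1 0 * Real.exp 0) ^ 2 + (g 1 1 * Real.exp (-0)) ^ 2 := by
    simpa using hN
  have hNV : 0 < (g 1 0 * ((Real.exp 0 + Real.exp (-0)) / 2)
        + g 1 1 * ((Real.exp 0 - Real.exp (-0)) / 2)) ^ 2
      + (g 1 0 * ((Real.exp 0 - Real.exp (-0)) / 2)
        + g 1 1 * ((Real.exp 0 + Real.exp (-0)) / 2)) ^ 2 := by
    norm_num [Real.exp_zero]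
    simpa using hN
  have keyH := key z ν ((g.det ^ d : ℝ) : ℂ) hg huH hvH hNH
  have keyV := key z ν ((g.det ^ d : ℝ) : ℂ) hg huV hvV hNV
  -- identify the composed functions
  have hfunH := keyH.congr_of_eventuallyEq
      (f₁ := fun s : ℝ =>
        Phi z d ν (g * NormedSpace.exp (s • (!![1, 0; 0, -1] : Matrix (Fin 2) (Fin 2) ℝ))))
      (Filter.Eventually.of_forall fun s => by
    have e0 : (g * !![Real.exp s, 0; 0, Real.exp (-s)]) 1 0 = g 1 0 * Real.exp s := by
      simp [Matrix.mul_apply, Fin.sum_univ_two]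
    have e1 : (g * !![Real.exp s, 0; 0, Real.exp (-s)]) 1 1 = g 1 1 * Real.exp (-s) := by
      simp [Matrix.mul_apply, Fin.sum_univ_two]
    have ed : (g * !![Real.exp s, 0; 0, Real.exp (-s)]).det = g.det := by
      rw [Matrix.det_mul, Matrix.det_fin_two_of]
      norm_num [← Real.exp_add]
    dsimp only
    rw [expH_eq]
    simp only [Phi]
    rw [ed, e0, e1])
  have hfunV := keyV.congr_of_eventuallyEq
      (f₁ := fun s : ℝ =>
        Phi z d ν (g * NormedSpace.exp (s • (!![0, 1; 1, 0] : Matrix (Fin 2) (Fin 2) ℝ))))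
      (Filter.Eventually.of_forall fun s => by
    have e0 : (g * !![(Real.exp s + Real.exp (-s)) / 2, (Real.exp s - Real.exp (-s)) / 2;
        (Real.exp s - Real.exp (-s)) / 2, (Real.exp s + Real.exp (-s)) / 2]) 1 0
        = g 1 0 * ((Real.exp s + Real.exp (-s)) / 2) + g 1 1 * ((Real.exp s - Real.exp (-s)) / 2) := by
      simp [Matrix.mul_apply, Fin.sum_univ_two]
    have e1 : (g * !![(Real.exp s + Real.exp (-s)) / 2, (Real.exp s - Real.exp (-s)) / 2;
        (Real.exp s - Real.exp (-s)) / 2, (Real.exp s + Real.exp (-s)) / 2]) 1 1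
        = g 1 0 * ((Real.exp s - Real.exp (-s)) / 2) + g 1 1 * ((Real.exp s + Real.exp (-s)) / 2) := by
      simp [Matrix.mul_apply, Fin.sum_univ_two]
    have ed : (g * !![(Real.exp s + Real.exp (-s)) / 2, (Real.exp s - Real.exp (-s)) / 2;
        (Real.exp s - Real.exp (-s)) / 2, (Real.exp s + Real.exp (-s)) / 2]).det = g.det := by
      rw [Matrix.det_mul, Matrix.det_fin_two_of]
      have hEE : Real.exp s * Real.exp (-s) = 1 := by
        rw [← Real.exp_add]; simp
      have : (Real.exp s + Real.exp (-s)) / 2 * ((Real.exp s + Real.exp (-s)) / 2)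
          - (Real.exp s - Real.exp (-s)) / 2 * ((Real.exp s - Real.exp (-s)) / 2) = 1 := by
        linear_combination hEE
      rw [this, mul_one]
    dsimp only
    rw [expV_eq]
    simp only [Phi]
    rw [ed, e0, e1])
  refine ⟨_, _, hfunH, hfunV, ?_⟩
  -- final algebraic identity
  simp only [Phi]
  norm_num [Real.exp_zero]
  have hnum0 : ((g 1 1 : ℂ) - Complex.I * (g 1 0 : ℂ)) ≠ 0 := by
    intro h
    rw [Complex.ext_iff] at h
    simp at h
    nlinarith [h.1, h.2, hN]
  have hR0 : ((Real.sqrt (g 1 0 ^ 2 + g 1 1 ^ 2) : ℝ) : ℂ) ≠ 0 :=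
    Complex.ofReal_ne_zero.2 (Real.sqrt_pos.2 hN).ne'
  have hG0 : ((g 1 1 : ℂ) - Complex.I * (g 1 0 : ℂ)) /
      ((Real.sqrt (g 1 0 ^ 2 + g 1 1 ^ 2) : ℝ) : ℂ) ≠ 0 := div_ne_zero hnum0 hR0
  have hN0c : ((g 1 0 : ℂ) ^ 2 + (g 1 1 : ℂ) ^ 2) ≠ 0 := by
    have h2 : ((g 1 0 : ℂ) ^ 2 + (g 1 1 : ℂ) ^ 2) = ((g 1 0 ^ 2 + g 1 1 ^ 2 : ℝ) : ℂ) := by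
      push_cast; ring
    rw [h2]
    exact_mod_cast hN.ne'
  have hR2 : ((Real.sqrt (g 1 0 ^ 2 + g 1 1 ^ 2) : ℝ) : ℂ) ^ 2
      = ((g 1 0 : ℂ) ^ 2 + (g 1 1 : ℂ) ^ 2) := by
    rw [← Complex.ofReal_pow, Real.sq_sqrt hN.le]
    push_cast; ring
  have hB2 : (((g 1 1 : ℂ) - Complex.I * (g 1 0 : ℂ)) /
        ((Real.sqrt (g 1 0 ^ 2 + g 1 1 ^ 2) : ℝ) : ℂ)) ^ (ν - 2)
      = (((g 1 1 : ℂ) - Complex.I * (g 1 0 : ℂ)) /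
        ((Real.sqrt (g 1 0 ^ 2 + g 1 1 ^ 2) : ℝ) : ℂ)) ^ ν /
        (((g 1 1 : ℂ) - Complex.I * (g 1 0 : ℂ)) /
        ((Real.sqrt (g 1 0 ^ 2 + g 1 1 ^ 2) : ℝ) : ℂ)) ^ (2 : ℕ) := by
    rw [zpow_sub₀ hG0]
    norm_cast
  rw [hB2, div_pow, hR2]
  set A := ((g.det : ℂ) / ((g 1 0 : ℂ) ^ 2 + (g 1 1 : ℂ) ^ 2)) ^ (z / 2) with hA
  set B := (((g 1 1 : ℂ) - Complex.I * (g 1 0 : ℂ)) /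
      ((Real.sqrt (g 1 0 ^ 2 + g 1 1 ^ 2) : ℝ) : ℂ)) ^ ν with hBdef
  have hI2 : (Complex.I) ^ 2 = -1 := Complex.I_sq
  have hI3 : (Complex.I) ^ 3 = -Complex.I := by rw [pow_succ, hI2]; ring
  have hI4 : (Complex.I) ^ 4 = 1 := by rw [show (4:ℕ) = 2*2 from rfl, pow_mul, hI2]; ring
  have hc : ((g 1 1 : ℂ) - (g 1 0 : ℂ) * Complex.I) ≠ 0 := by rw [mul_comm]; exact hnum0
  field_simp
  ring_nf
  simp only [hI2, hI3, hI4]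
  ring
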